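/- Let A be an SPD n×n matrix, P an n×m matrix with full column rank, A_c := PᵀAP, and T := P·A_c⁻¹·Pᵀ·A. Let S be an n×n matrix with ‖S·u‖_A ≤ ‖u‖_A for all u ∈ ℝⁿ, let k ∈ ℕ, and let ε ≥ 0 be such that ‖Sᵏ·(I−T)·Sᵏ·u‖_A ≤ ε·‖u‖_A for all u ∈ ℝⁿ. Let W_c be an m×m matrix and q_c ≥ 0 with ‖W_c·x‖_{A_c} ≤ q_c·‖x‖_{A_c} for all x ∈ ℝᵐ. Then the matrix W := Sᵏ·(I − P·(I − W_c²)·A_c⁻¹·Pᵀ·A)·Sᵏ satisfies ‖W·u‖_A ≤ (ε + q_c²)·‖u‖_A for all u ∈ ℝⁿ. -/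

import Mathlib

open Matrix

/-- The `Q`-norm of a vector: `‖v‖_Q := √(vᵀ Q v)`. -/
noncomputable def matNorm {n : ℕ} (Q : Matrix (Fin n) (Fin n) ℝ) (v : Fin n → ℝ) : ℝ :=
  Real.sqrt (v ⬝ᵥ Q *ᵥ v)

lemma dot_conj {n m l : ℕ} (M : Matrix (Fin n) (Fin m) ℝ) (Q : Matrix (Fin n) (Fin n) ℝ)
    (N : Matrix (Fin n) (Fin l) ℝ) (x : Fin m → ℝ) (y : Fin l → ℝ) :
    (M *ᵥ x) ⬝ᵥ Q *ᵥ (N *ᵥ y) = x ⬝ᵥ (Mᵀ * Q * N) *ᵥ y := by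
  rw [mulVec_mulVec, dotProduct_mulVec, vecMul_mulVec, ← dotProduct_mulVec, Matrix.mul_assoc]

lemma matNorm_nonneg {n : ℕ} (Q : Matrix (Fin n) (Fin n) ℝ) (v : Fin n → ℝ) :
    0 ≤ matNorm Q v := Real.sqrt_nonneg _

open scoped MatrixOrder in
lemma matNorm_eq_norm {n : ℕ} {A : Matrix (Fin n) (Fin n) ℝ} (hA : A.PosSemidef)
    (v : Fin n → ℝ) :
    matNorm A v = ‖(WithLp.equiv 2 (Fin n → ℝ)).symm (CFC.sqrt A *ᵥ v)‖ := by
  have hBt : (CFC.sqrt A)ᵀ = CFC.sqrt A := by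
    rw [← conjTranspose_eq_transpose_of_trivial]
    exact (nonneg_iff_posSemidef.mp (CFC.sqrt_nonneg A)).1.eq
  have h1 : v ⬝ᵥ A *ᵥ v = (CFC.sqrt A *ᵥ v) ⬝ᵥ (CFC.sqrt A *ᵥ v) := by
    conv_lhs => rw [← CFC.sqrt_mul_sqrt_self A hA.nonneg]
    rw [← mulVec_mulVec, dotProduct_mulVec, ← mulVec_transpose, hBt]
  rw [matNorm, h1, EuclideanSpace.norm_eq]
  congr 1
  simp [dotProduct, Real.norm_eq_abs, sq_abs, sq]

lemma matNorm_triangle {n : ℕ} {A : Matrix (Fin n) (Fin n) ℝ} (hA : A.PosSemidef)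
    (a b : Fin n → ℝ) : matNorm A (a + b) ≤ matNorm A a + matNorm A b := by
  rw [matNorm_eq_norm hA, matNorm_eq_norm hA, matNorm_eq_norm hA, mulVec_add,
    WithLp.equiv_symm_apply, WithLp.toLp_add]
  exact norm_add_le _ _

lemma matNorm_mono {n : ℕ} {A : Matrix (Fin n) (Fin n) ℝ} {a b : Fin n → ℝ}
    (h : a ⬝ᵥ A *ᵥ a ≤ b ⬝ᵥ A *ᵥ b) : matNorm A a ≤ matNorm A b :=
  Real.sqrt_le_sqrt h

/-- one-level recursion step for the W-cycle iteration matrix.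
If `‖S u‖_A ≤ ‖u‖_A`, `‖Sᵏ (I−T) Sᵏ u‖_A ≤ ε ‖u‖_A`, and the coarse iteration
matrix satisfies `‖W_c x‖_{A_c} ≤ q_c ‖x‖_{A_c}`, then
`W = Sᵏ (I − P (I − W_c²) A_c⁻¹ Pᵀ A) Sᵏ` satisfies `‖W u‖_A ≤ (ε + q_c²) ‖u‖_A`. -/
theorem stmt3 {n m : ℕ} (A : Matrix (Fin n) (Fin n) ℝ) (hA : A.PosDef)
    (P : Matrix (Fin n) (Fin m) ℝ) (hP : P.rank = m)
    (T : Matrix (Fin n) (Fin n) ℝ) (hT : T = P * (Pᵀ * A * P)⁻¹ * (Pᵀ * A))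
    (S : Matrix (Fin n) (Fin n) ℝ)
    (hS : ∀ u : Fin n → ℝ, matNorm A (S *ᵥ u) ≤ matNorm A u)
    (k : ℕ) (ε : ℝ) (hε : 0 ≤ ε)
    (hSk : ∀ u : Fin n → ℝ,
        matNorm A ((S ^ k * (1 - T) * S ^ k) *ᵥ u) ≤ ε * matNorm A u)
    (Wc : Matrix (Fin m) (Fin m) ℝ) (qc : ℝ) (hqc : 0 ≤ qc)
    (hWc : ∀ x : Fin m → ℝ,
        matNorm (Pᵀ * A * P) (Wc *ᵥ x) ≤ qc * matNorm (Pᵀ * A * P) x)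
    (W : Matrix (Fin n) (Fin n) ℝ)
    (hW : W = S ^ k * (1 - P * (1 - Wc ^ 2) * (Pᵀ * A * P)⁻¹ * (Pᵀ * A)) * S ^ k) :
    ∀ u : Fin n → ℝ, matNorm A (W *ᵥ u) ≤ (ε + qc ^ 2) * matNorm A u := by
  intro u
  set Ac := Pᵀ * A * P with hAcDef
  have hAt : Aᵀ = A := by
    rw [← conjTranspose_eq_transpose_of_trivial]; exact hA.1.eq
  have hAct : Acᵀ = Ac := by
    rw [hAcDef, transpose_mul, transpose_mul, transpose_transpose, hAt, Matrix.mul_assoc]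
  have hPinj : ∀ x : Fin m → ℝ, P *ᵥ x = 0 → x = 0 := by
    intro x hx
    have hker : LinearMap.ker P.mulVecLin = ⊥ := by
      have h1 : Module.finrank ℝ (LinearMap.range P.mulVecLin)
          + Module.finrank ℝ (LinearMap.ker P.mulVecLin)
          = Module.finrank ℝ (Fin m → ℝ) := P.mulVecLin.finrank_range_add_finrank_ker
      have h2 : Module.finrank ℝ (LinearMap.range P.mulVecLin) = m := hP
      have h3 : Module.finrank ℝ (Fin m → ℝ) = m := by simp
      have h4 : Module.finrank ℝ (LinearMap.ker P.mulVecLin) = 0 := by omega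
      exact Submodule.finrank_eq_zero.mp h4
    exact LinearMap.ker_eq_bot.mp hker (by simpa using hx)
  have hAc : Ac.PosDef := by
    refine Matrix.PosDef.of_dotProduct_mulVec_pos ?_ ?_
    · show Acᴴ = Ac
      rw [conjTranspose_eq_transpose_of_trivial]; exact hAct
    · intro x hx
      have hPx : P *ᵥ x ≠ 0 := fun h => hx (hPinj x h)
      have h := hA.dotProduct_mulVec_pos hPx
      simp only [star_trivial] at h ⊢
      rw [hAcDef, ← dot_conj P A P x x]
      exact h
  have hdet : IsUnit Ac.det := isUnit_iff_ne_zero.mpr hAc.det_pos.ne'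
  have hAcInv : Ac * Ac⁻¹ = 1 := mul_nonsing_inv Ac hdet
  have hInvT : (Ac⁻¹)ᵀ = Ac⁻¹ := by rw [transpose_nonsing_inv, hAct]
  have hT2 : T * T = T := by
    rw [hT]
    calc P * Ac⁻¹ * (Pᵀ * A) * (P * Ac⁻¹ * (Pᵀ * A))
        = P * (Ac⁻¹ * ((Pᵀ * A * P) * Ac⁻¹)) * (Pᵀ * A) := by
          simp only [Matrix.mul_assoc]
      _ = P * Ac⁻¹ * (Pᵀ * A) := by
          rw [← hAcDef, hAcInv, Matrix.mul_one, Matrix.mul_assoc]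
  have hTA : Tᵀ * A = A * T := by
    rw [hT]
    simp only [transpose_mul, transpose_transpose, hInvT, hAt, Matrix.mul_assoc]
  have hATT : Tᵀ * A * T = A * T := by
    rw [hTA, Matrix.mul_assoc, hT2]
  have hTcontr : ∀ v : Fin n → ℝ, matNorm A (T *ᵥ v) ≤ matNorm A v := by
    intro v
    apply matNorm_mono
    have key : (T *ᵥ v) ⬝ᵥ A *ᵥ (T *ᵥ v) = v ⬝ᵥ (Tᵀ * A * T) *ᵥ v := dot_conj T A T v v
    have key2 : ((1 - T) *ᵥ v) ⬝ᵥ A *ᵥ ((1 - T) *ᵥ v)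
        = v ⬝ᵥ ((1 - T)ᵀ * A * (1 - T)) *ᵥ v := dot_conj (1 - T) A (1 - T) v v
    have hexp : (1 - T)ᵀ * A * (1 - T) = A - A * T := by
      rw [transpose_sub, transpose_one]
      have e1 : (1 - Tᵀ) * A * (1 - T) = A - A * T - Tᵀ * A + Tᵀ * A * T := by
        noncomm_ring
      rw [e1, hTA, Matrix.mul_assoc, hT2]
      abel
    have hpos : 0 ≤ ((1 - T) *ᵥ v) ⬝ᵥ A *ᵥ ((1 - T) *ᵥ v) := by
      have h := hA.posSemidef.dotProduct_mulVec_nonneg ((1 - T) *ᵥ v)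
      simpa using h
    rw [key, hATT]
    have h0 : 0 ≤ v ⬝ᵥ (A - A * T) *ᵥ v := by
      rw [← hexp, ← key2]; exact hpos
    rw [sub_mulVec, dotProduct_sub] at h0
    linarith
  have hPnorm : ∀ x : Fin m → ℝ, matNorm A (P *ᵥ x) = matNorm Ac x := by
    intro x
    rw [matNorm, matNorm, dot_conj P A P x x, hAcDef]
  have hSpow : ∀ (j : ℕ) (v : Fin n → ℝ), matNorm A (S ^ j *ᵥ v) ≤ matNorm A v := by
    intro j
    induction j with
    | zero => intro v; simp
    | succ i ih =>
      intro v
      rw [pow_succ, ← mulVec_mulVec]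
      exact le_trans (ih (S *ᵥ v)) (hS v)
  have hWdec : W = S ^ k * (1 - T) * S ^ k
      + S ^ k * (P * (Wc * Wc) * (Ac⁻¹ * (Pᵀ * A))) * S ^ k := by
    rw [hW, hT]
    have e : (1 : Matrix (Fin n) (Fin n) ℝ) - P * (1 - Wc ^ 2) * Ac⁻¹ * (Pᵀ * A)
        = (1 - P * Ac⁻¹ * (Pᵀ * A)) + P * (Wc * Wc) * (Ac⁻¹ * (Pᵀ * A)) := by
      rw [pow_two, Matrix.mul_sub, Matrix.mul_one, Matrix.sub_mul, Matrix.sub_mul]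
      simp only [Matrix.mul_assoc]
      abel
    rw [e]; noncomm_ring
  set v := S ^ k *ᵥ u with hv
  set x := (Ac⁻¹ * (Pᵀ * A)) *ᵥ v with hx
  have hPxT : P *ᵥ x = T *ᵥ v := by
    rw [hx, mulVec_mulVec, hT, Matrix.mul_assoc]
  have hb : (S ^ k * (P * (Wc * Wc) * (Ac⁻¹ * (Pᵀ * A))) * S ^ k) *ᵥ u
      = S ^ k *ᵥ (P *ᵥ (Wc *ᵥ (Wc *ᵥ x))) := by
    rw [hx, hv]
    simp only [mulVec_mulVec, Matrix.mul_assoc]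
  have hbound : matNorm A ((S ^ k * (P * (Wc * Wc) * (Ac⁻¹ * (Pᵀ * A))) * S ^ k) *ᵥ u)
      ≤ qc ^ 2 * matNorm A u := by
    rw [hb]
    calc matNorm A (S ^ k *ᵥ (P *ᵥ (Wc *ᵥ (Wc *ᵥ x))))
        ≤ matNorm A (P *ᵥ (Wc *ᵥ (Wc *ᵥ x))) := hSpow k _
      _ = matNorm Ac (Wc *ᵥ (Wc *ᵥ x)) := hPnorm _
      _ ≤ qc * matNorm Ac (Wc *ᵥ x) := hWc _
      _ ≤ qc * (qc * matNorm Ac x) := mul_le_mul_of_nonneg_left (hWc x) hqc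
      _ = qc ^ 2 * matNorm Ac x := by ring
      _ = qc ^ 2 * matNorm A (P *ᵥ x) := by rw [hPnorm]
      _ = qc ^ 2 * matNorm A (T *ᵥ v) := by rw [hPxT]
      _ ≤ qc ^ 2 * matNorm A v := mul_le_mul_of_nonneg_left (hTcontr v) (by positivity)
      _ ≤ qc ^ 2 * matNorm A u := mul_le_mul_of_nonneg_left (hSpow k u) (by positivity)
  calc matNorm A (W *ᵥ u)
      = matNorm A ((S ^ k * (1 - T) * S ^ k) *ᵥ u
          + (S ^ k * (P * (Wc * Wc) * (Ac⁻¹ * (Pᵀ * A))) * S ^ k) *ᵥ u) := by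
        rw [hWdec, add_mulVec]
    _ ≤ matNorm A ((S ^ k * (1 - T) * S ^ k) *ᵥ u)
        + matNorm A ((S ^ k * (P * (Wc * Wc) * (Ac⁻¹ * (Pᵀ * A))) * S ^ k) *ᵥ u) :=
        matNorm_triangle hA.posSemidef _ _
    _ ≤ ε * matNorm A u + qc ^ 2 * matNorm A u := add_le_add (hSk u) hbound
    _ = (ε + qc ^ 2) * matNorm A u := by ring
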